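/- (Lower bound on the noiseless trajectory of a constant action) Let k ≥ 1, γ_0 ≥ 0, and γ_1, ..., γ_k ≥ 0 with Γ := Σ_{i=1}^k γ_i < 1. Define x_t = γ_0 + Σ_{i=1}^k γ_i x_{t-i} with x_s = 0 for s ≤ 0. Then for every t ≥ 1, x_t ≥ γ_0 (1 − Γ^{⌈t/k⌉}) / (1 − Γ). -/

import Mathlib

/-!
STATEMENT 17 (Lower bound on the noiseless trajectory of a constant action): with
`γ_0 ≥ 0`, `γ_i ≥ 0`, `Γ = ∑_{i=1}^k γ_i < 1`, zero initial conditions, and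
`x_t = γ_0 + ∑_{i=1}^k γ_i x_{t-i}`, for every `t ≥ 1`:
`x_t ≥ γ_0 (1 − Γ^{⌈t/k⌉})/(1 − Γ)`.
-/
theorem constant_action_trajectory_lower_bound
    (k : ℕ) (hk : 1 ≤ k)
    (γ0 : ℝ) (hγ0 : 0 ≤ γ0)
    (γ : ℕ → ℝ) (hγ : ∀ i : ℕ, 1 ≤ i → i ≤ k → 0 ≤ γ i)
    (Γ : ℝ) (hΓdef : Γ = ∑ i ∈ Finset.Icc 1 k, γ i) (hΓ : Γ < 1)
    (x : ℤ → ℝ) (hx0 : ∀ s : ℤ, s ≤ 0 → x s = 0)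
    (hrec : ∀ t : ℤ, 1 ≤ t →
      x t = γ0 + ∑ i ∈ Finset.Icc 1 k, γ i * x (t - i)) :
    ∀ t : ℤ, 1 ≤ t →
      γ0 * (1 - Γ ^ (⌈((t : ℚ)) / (k : ℚ)⌉).toNat) / (1 - Γ) ≤ x t := by
  have hΓ0 : 0 ≤ Γ := by
    rw [hΓdef]
    exact Finset.sum_nonneg fun i hi =>
      hγ i (Finset.mem_Icc.mp hi).1 (Finset.mem_Icc.mp hi).2
  have h1Γ : 0 < 1 - Γ := by linarith
  have hkQ : (0:ℚ) < (k:ℚ) := by exact_mod_cast hk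
  have mono : ∀ a b : ℕ, a ≤ b →
      γ0 * (1 - Γ ^ a) / (1 - Γ) ≤ γ0 * (1 - Γ ^ b) / (1 - Γ) := by
    intro a b hab
    have : Γ ^ b ≤ Γ ^ a := pow_le_pow_of_le_one hΓ0 hΓ.le hab
    apply div_le_div_of_nonneg_right ?_ h1Γ.le
    nlinarith
  have key : ∀ n : ℕ, ∀ t : ℤ, 1 ≤ t → t.toNat = n →
      γ0 * (1 - Γ ^ (⌈((t : ℚ)) / (k : ℚ)⌉).toNat) / (1 - Γ) ≤ x t := by
    intro n
    induction n using Nat.strong_induction_on with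
    | _ n ih =>
      intro t ht htn
      have hceil1 : 1 ≤ ⌈((t : ℚ)) / (k : ℚ)⌉ := by
        apply Int.ceil_pos.mpr
        apply div_pos _ hkQ
        exact_mod_cast ht
      set N := (⌈((t : ℚ)) / (k : ℚ)⌉).toNat with hN
      have hN1 : 1 ≤ N := by omega
      set m := N - 1 with hm
      have hmN : m + 1 = N := by omega
      have hbound : ∀ i ∈ Finset.Icc 1 k,
          γ0 * (1 - Γ ^ m) / (1 - Γ) ≤ x (t - i) := by
        intro i hi
        obtain ⟨hi1, hik⟩ := Finset.mem_Icc.mp hi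
        by_cases hti : t - i ≤ 0
        · rw [hx0 _ hti]
          -- then t ≤ i ≤ k, so ceil = 1, N = 1, m = 0
          have hle1 : ⌈((t : ℚ)) / (k : ℚ)⌉ ≤ 1 := by
            apply Int.ceil_le.mpr
            have htk : t ≤ (k:ℤ) := by
              have : (i:ℤ) ≤ (k:ℤ) := by exact_mod_cast hik
              omega
            have htk' : (t:ℚ) ≤ (k:ℚ) := by exact_mod_cast htk
            rw [show ((1:ℤ):ℚ) = 1 from by norm_num, div_le_one hkQ]
            exact htk'
          have : N = 1 := by omega
          have : m = 0 := by omega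
          simp [this]
        · push_neg at hti
          have hti1 : 1 ≤ t - i := hti
          have hlt : (t - i).toNat < n := by omega
          have := ih _ hlt (t - i) hti1 rfl
          refine le_trans ?_ this
          apply mono
          -- m ≤ ⌈(t-i)/k⌉.toNat
          have hceil : ⌈((t : ℚ)) / (k : ℚ)⌉ - 1 ≤ ⌈(((t - i : ℤ) : ℚ)) / (k : ℚ)⌉ := by
            have : ((t : ℚ)) / (k : ℚ) - 1 ≤ (((t - i : ℤ) : ℚ)) / (k : ℚ) := by
              push_cast
              have hik' : (i:ℚ) ≤ (k:ℚ) := by exact_mod_cast hik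
              have hdiff : ((t:ℚ) - i)/k - ((t:ℚ)/k - 1) = ((k:ℚ) - i)/k := by
                field_simp
                ring
              have hnn : (0:ℚ) ≤ ((k:ℚ) - i)/k := div_nonneg (by linarith) hkQ.le
              linarith
            calc ⌈((t : ℚ)) / (k : ℚ)⌉ - 1 = ⌈((t : ℚ)) / (k : ℚ) - 1⌉ :=
                  (Int.ceil_sub_one _).symm
              _ ≤ _ := Int.ceil_le_ceil this
          omega
      have hx : x t = γ0 + ∑ i ∈ Finset.Icc 1 k, γ i * x (t - i) := hrec t ht
      have hsum : Γ * (γ0 * (1 - Γ ^ m) / (1 - Γ)) ≤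
          ∑ i ∈ Finset.Icc 1 k, γ i * x (t - i) := by
        have h1 : ∑ i ∈ Finset.Icc 1 k, γ i * (γ0 * (1 - Γ ^ m) / (1 - Γ)) ≤
            ∑ i ∈ Finset.Icc 1 k, γ i * x (t - i) := by
          apply Finset.sum_le_sum
          intro i hi
          obtain ⟨hi1, hik⟩ := Finset.mem_Icc.mp hi
          exact mul_le_mul_of_nonneg_left (hbound i hi) (hγ i hi1 hik)
        have h2 : ∑ i ∈ Finset.Icc 1 k, γ i * (γ0 * (1 - Γ ^ m) / (1 - Γ)) =
            Γ * (γ0 * (1 - Γ ^ m) / (1 - Γ)) := by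
          rw [← Finset.sum_mul, ← hΓdef]
        linarith
      have hfinal : γ0 * (1 - Γ ^ N) / (1 - Γ) =
          γ0 + Γ * (γ0 * (1 - Γ ^ m) / (1 - Γ)) := by
        rw [← hmN]
        field_simp
        ring
      rw [hx, hfinal]
      linarith
  intro t ht
  exact key t.toNat t ht rfl
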